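/- With the same abstract Hecke recursion setup: suppose additionally that the hypothesis of the previous lemma holds and also c⁽ᵐ⁾ satisfies, for ℓ ∣ n with ℓ² ∤ n and m ≥ 2, c⁽ᵐ⁾(n) = c⁽ᵐ⁻¹⁾(ℓ²n) − B·c⁽ᵐ⁻²⁾(n) (since χ(n) = 0 and ℓ² ∤ n imply the middle terms vanish). Then for all m ≥ 1 and all n with ℓ ∣∣ n, c⁽ᵐ⁾(n) = b(ℓ^{2m}n) − A·χ(−D)·b(ℓ^{2m−2}n). -/

import Mathlib

/-- Auxiliary doubly-indexed sequence for the proof of `stmt2`. -/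
def Sa (B : ℤ) (bb : ℕ → ℤ) : ℕ → ℕ → ℤ
  | 0, j => bb j
  | m+1, 0 => bb (m+1)
  | m+1, j+1 => bb (m+j+2) + B * Sa B bb m j

lemma Sa_zero (B : ℤ) (bb : ℕ → ℤ) (m : ℕ) : Sa B bb m 0 = bb m := by
  cases m <;> rfl

/-- Auxiliary: the conjectured value of `c m (ℓ^(2j) n)`. -/
def Ta (α B : ℤ) (bb : ℕ → ℤ) : ℕ → ℕ → ℤ
  | 0, j => bb j
  | m+1, j => Sa B bb (m+1) j - α * Sa B bb m j

theorem stmt2 (ℓ : ℕ) (hℓ : ℓ.Prime) (hℓ5 : 5 ≤ ℓ)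
    (A B D : ℤ) (χ : ℤ → ℤ) (hχmul : ∀ x y, χ (x * y) = χ x * χ y) (hχℓ : χ (ℓ : ℤ) = 0)
    (b : ℤ → ℤ) (c : ℕ → ℤ → ℤ)
    (hc0 : ∀ n, c 0 n = b n)
    (hc1 : ∀ n, c 1 n = b ((ℓ : ℤ) ^ 2 * n) + A * (χ n - χ (-D)) * b n +
      B * (if ((ℓ : ℤ) ^ 2 ∣ n) then b (n / (ℓ : ℤ) ^ 2) else 0))
    (hcrec : ∀ m, 2 ≤ m → ∀ n, c m n = c (m - 1) ((ℓ : ℤ) ^ 2 * n) + A * χ n * c (m - 1) n +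
      B * (if ((ℓ : ℤ) ^ 2 ∣ n) then c (m - 1) (n / (ℓ : ℤ) ^ 2) else 0) - B * c (m - 2) n)
    (hcrec' : ∀ m, 2 ≤ m → ∀ n : ℤ, (ℓ : ℤ) ∣ n → ¬ ((ℓ : ℤ) ^ 2 ∣ n) →
      c m n = c (m - 1) ((ℓ : ℤ) ^ 2 * n) - B * c (m - 2) n) :
    ∀ m, 1 ≤ m → ∀ n : ℤ, (ℓ : ℤ) ∣ n → ¬ ((ℓ : ℤ) ^ 2 ∣ n) →
      c m n = b ((ℓ : ℤ) ^ (2 * m) * n) - A * χ (-D) * b ((ℓ : ℤ) ^ (2 * m - 2) * n) := by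
  intro m hm n hn hn2
  have hℓ0 : (ℓ : ℤ) ≠ 0 := by exact_mod_cast hℓ.ne_zero
  obtain ⟨k, hk⟩ := hn
  have hχn : χ n = 0 := by rw [hk, hχmul, hχℓ, zero_mul]
  have hχx : ∀ j : ℕ, χ ((ℓ : ℤ) ^ (2*j) * n) = 0 := fun j => by rw [hχmul, hχn, mul_zero]
  set α := A * χ (-D) with hα
  set bb : ℕ → ℤ := fun j => b ((ℓ : ℤ) ^ (2*j) * n) with hbb
  have hx1 : ∀ j : ℕ, (ℓ:ℤ)^2 * ((ℓ:ℤ)^(2*j) * n) = (ℓ:ℤ)^(2*(j+1)) * n := by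
    intro j
    rw [← mul_assoc, ← pow_add]
    congr 1
    ring
  have hdvd : ∀ j : ℕ, ((ℓ:ℤ)^2 ∣ (ℓ:ℤ)^(2*(j+1)) * n) := by
    intro j
    rw [← hx1]
    exact Dvd.intro _ rfl
  have hquot : ∀ j : ℕ, ((ℓ:ℤ)^(2*(j+1)) * n) / (ℓ:ℤ)^2 = (ℓ:ℤ)^(2*j) * n := by
    intro j
    rw [← hx1, Int.mul_ediv_cancel_left _ (pow_ne_zero 2 hℓ0)]
  have hx0 : (ℓ:ℤ)^(2*0) * n = n := by norm_num
  have hnd : ¬ ((ℓ:ℤ)^2 ∣ (ℓ:ℤ)^(2*0) * n) := by rwa [hx0]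
  have key : ∀ M : ℕ, ∀ j : ℕ, c M ((ℓ:ℤ)^(2*j) * n) = Ta α B bb M j := by
    intro M
    induction M using Nat.twoStepInduction with
    | zero =>
      intro j
      rw [hc0]
      rfl
    | one =>
      intro j
      rw [hc1, hχx]
      rcases j with _ | j
      · rw [if_neg hnd, hx1 0]
        show bb 1 + A * (0 - χ (-D)) * bb 0 + B * 0 = Ta α B bb 1 0
        simp only [Ta, Sa]
        ring
      · rw [if_pos (hdvd j), hquot j, hx1 (j+1)]
        show bb (j+2) + A * (0 - χ (-D)) * bb (j+1) + B * bb j = Ta α B bb 1 (j+1)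
        simp only [Ta, Sa]
        rw [hα]; ring
    | more M ihM ihM1 =>
      intro j
      rcases j with _ | j
      · rw [hx0, hcrec' (M+2) (by omega) n ⟨k, hk⟩ hn2]
        simp only [show M + 2 - 1 = M + 1 from rfl, show M + 2 - 2 = M from rfl]
        have e1 : (ℓ:ℤ)^2 * n = (ℓ:ℤ)^(2*1) * n := by rw [← hx1 0, hx0]
        rw [e1, ihM1 1, ← hx0, ihM 0]
        rcases M with _ | M <;> · simp only [Ta, Sa, Sa_zero]; ring
      · rw [hcrec (M+2) (by omega)]
        simp only [show M + 2 - 1 = M + 1 from rfl, show M + 2 - 2 = M from rfl]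
        rw [hχx, if_pos (hdvd j), hquot j, hx1 (j+1), ihM1 (j+1+1), ihM1 (j+1), ihM1 j, ihM (j+1)]
        rcases M with _ | M <;> · simp only [Ta, Sa]; ring_nf
  obtain ⟨m', rfl⟩ : ∃ m', m = m' + 1 := ⟨m - 1, by omega⟩
  have := key (m' + 1) 0
  rw [hx0] at this
  rw [this]
  show Sa B bb (m'+1) 0 - α * Sa B bb m' 0 = _
  rw [Sa_zero, Sa_zero]
  have : 2 * (m' + 1) - 2 = 2 * m' := by omega
  rw [this]
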